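/- In a finite DTMC, for any state s ∉ B and any subset E of its outgoing transitions, the quantity U(s) := L(s) + (1 − Σ_{(s,t)∈E} P(s,t)), where L(s) is the partial lower bound computed from E using upper bounds U_p(t) ≥ Pr[◇B | t] on the targets, is an upper bound on Pr[◇B | s]; i.e., assuming all undiscovered transition mass leads directly to B yields a sound upper bound. -/
import Mathlib


noncomputable section
attribute [local instance] Classical.propDecidable

variable {S : Type*}

/-- Probability of a finite path: product of transition probabilities. -/
def pathProb (P : S → S → ℝ) : List S → ℝ
  | [] => 1
  | [_] => 1
  | a :: b :: r => P a b * pathProb P (b :: r)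

/-- A danger path from `s` into `B`: nonempty, starts at `s`, ends in `B`,
all states except the last outside `B`. -/
def IsDangerPath (T : S → S → Prop) (B : Set S) (s : S) (l : List S) : Prop :=
  l.Chain' T ∧ ∃ h : l ≠ [], l.head h = s ∧ l.getLast h ∈ B ∧ ∀ x ∈ l.dropLast, x ∉ B

/-- Reachability in at most `n` steps. -/
def ReachN (T : S → S → Prop) : ℕ → S → S → Prop
  | 0, s, u => s = u
  | n + 1, s, u => s = u ∨ ∃ t, T s t ∧ ReachN T n t u

/-- States that can reach `X` within `j` steps. -/
def PreN (T : S → S → Prop) (X : Set S) (j : ℕ) : Set S :=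
  {s | ∃ b ∈ X, ReachN T j s b}

/-- States reachable from `I` within `i` steps. -/
def PostN (T : S → S → Prop) (I : Set S) (i : ℕ) : Set S :=
  {s | ∃ a ∈ I, ReachN T i a s}

/-- States that can reach `X` (backward reachable set). -/
def PreStar (T : S → S → Prop) (X : Set S) : Set S :=
  {s | ∃ b ∈ X, Relation.ReflTransGen T s b}

/-- States reachable from `I`. -/
def PostStar (T : S → S → Prop) (I : Set S) : Set S :=
  {s | ∃ a ∈ I, Relation.ReflTransGen T a s}

/-- The reachability (hitting) probability `Pr[◇B | s]`, characterized as the least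
nonnegative solution of the standard fixed-point equations. -/
def hitProb [Fintype S] (P : S → S → ℝ) (B : Set S) (s : S) : ℝ :=
  sInf {r : ℝ | ∃ x : S → ℝ, (∀ t, 0 ≤ x t) ∧ (∀ t ∈ B, x t = 1) ∧
    (∀ t ∉ B, x t = ∑ u, P t u * x u) ∧ r = x s}

/-- Finite-horizon hitting probabilities. -/
def hseq [Fintype S] (P : S → S → ℝ) (B : Set S) : ℕ → S → ℝ
  | 0 => fun t => if t ∈ B then 1 else 0
  | n + 1 => fun t => if t ∈ B then 1 else ∑ u, P t u * hseq P B n u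

lemma hseq_le_feasible [Fintype S] (P : S → S → ℝ)
    (hnn : ∀ s t, 0 ≤ P s t) (B : Set S) (x : S → ℝ)
    (hx0 : ∀ t, 0 ≤ x t) (hxB : ∀ t ∈ B, x t = 1)
    (hxF : ∀ t ∉ B, x t = ∑ u, P t u * x u) :
    ∀ n t, hseq P B n t ≤ x t := by
  intro n
  induction n with
  | zero =>
    intro t
    by_cases ht : t ∈ B
    · simp [hseq, ht, hxB t ht]
    · simpa [hseq, ht] using hx0 t
  | succ n ih =>
    intro t
    by_cases ht : t ∈ B
    · simp [hseq, ht, hxB t ht]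
    · simp only [hseq, ht, if_false]
      rw [hxF t ht]
      exact Finset.sum_le_sum fun u _ =>
        mul_le_mul_of_nonneg_left (ih u) (hnn t u)

lemma hseq_nonneg [Fintype S] (P : S → S → ℝ)
    (hnn : ∀ s t, 0 ≤ P s t) (B : Set S) :
    ∀ n t, 0 ≤ hseq P B n t := by
  intro n
  induction n with
  | zero =>
    intro t; by_cases ht : t ∈ B <;> simp [hseq, ht]
  | succ n ih =>
    intro t
    by_cases ht : t ∈ B
    · simp [hseq, ht]
    · simp only [hseq, ht, if_false]
      exact Finset.sum_nonneg fun u _ => mul_nonneg (hnn t u) (ih u)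

lemma hseq_mono [Fintype S] (P : S → S → ℝ)
    (hnn : ∀ s t, 0 ≤ P s t) (B : Set S) :
    ∀ n t, hseq P B n t ≤ hseq P B (n + 1) t := by
  intro n
  induction n with
  | zero =>
    intro t
    by_cases ht : t ∈ B
    · simp [hseq, ht]
    · simp only [hseq, ht, if_false]
      exact Finset.sum_nonneg fun u _ =>
        mul_nonneg (hnn t u) (hseq_nonneg P hnn B 0 u)
  | succ n ih =>
    intro t
    by_cases ht : t ∈ B
    · simp [hseq, ht]
    · simp only [hseq, ht, if_false]
      exact Finset.sum_le_sum fun u _ =>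
        mul_le_mul_of_nonneg_left (ih u) (hnn t u)

lemma one_feasible [Fintype S] (P : S → S → ℝ) (hrow : ∀ s, ∑ t, P s t = 1)
    (B : Set S) :
    (∀ t : S, (0:ℝ) ≤ 1) ∧ (∀ t ∈ B, (1:ℝ) = 1) ∧
      (∀ t ∉ B, (1:ℝ) = ∑ u : S, P t u * 1) := by
  refine ⟨fun _ => zero_le_one, fun _ _ => rfl, fun t _ => ?_⟩
  simp [hrow t]

/-- The pointwise supremum of the finite-horizon probabilities is the least
nonnegative fixed point, hence equals `hitProb`. -/
lemma hitProb_eq_hsup [Fintype S] (P : S → S → ℝ)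
    (hnn : ∀ s t, 0 ≤ P s t) (hrow : ∀ s, ∑ t, P s t = 1) (B : Set S) :
    (∀ t, 0 ≤ (⨆ n, hseq P B n t)) ∧
    (∀ t ∈ B, (⨆ n, hseq P B n t) = 1) ∧
    (∀ t ∉ B, (⨆ n, hseq P B n t) = ∑ u, P t u * (⨆ n, hseq P B n u)) ∧
    (∀ t, hitProb P B t = ⨆ n, hseq P B n t) := by
  set h : S → ℝ := fun t => ⨆ n, hseq P B n t with hdef
  have hone := one_feasible P hrow B
  have hle1 : ∀ n t, hseq P B n t ≤ 1 :=
    hseq_le_feasible P hnn B (fun _ => 1) hone.1 hone.2.1 hone.2.2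
  have hbdd : ∀ t, BddAbove (Set.range fun n => hseq P B n t) :=
    fun t => ⟨1, by rintro r ⟨n, rfl⟩; exact hle1 n t⟩
  have hmono : ∀ t, Monotone fun n => hseq P B n t :=
    fun t => monotone_nat_of_le_succ fun n => hseq_mono P hnn B n t
  have htend : ∀ t, Filter.Tendsto (fun n => hseq P B n t)
      Filter.atTop (nhds (h t)) :=
    fun t => tendsto_atTop_ciSup (hmono t) (hbdd t)
  have h0 : ∀ t, 0 ≤ h t := fun t =>
    le_trans (hseq_nonneg P hnn B 0 t) (le_ciSup (hbdd t) 0)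
  have hB : ∀ t ∈ B, h t = 1 := by
    intro t ht
    have : ∀ n, hseq P B n t = 1 := by
      intro n; cases n <;> simp [hseq, ht]
    simp [hdef, this]
  have hF : ∀ t ∉ B, h t = ∑ u, P t u * h u := by
    intro t ht
    have t1 : Filter.Tendsto (fun n => hseq P B (n + 1) t)
        Filter.atTop (nhds (h t)) :=
      (htend t).comp (Filter.tendsto_add_atTop_nat 1)
    have t2 : Filter.Tendsto (fun n => ∑ u, P t u * hseq P B n u)
        Filter.atTop (nhds (∑ u, P t u * h u)) :=
      tendsto_finset_sum _ fun u _ => ((htend u).const_mul _)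
    have heq : (fun n => hseq P B (n + 1) t)
        = fun n => ∑ u, P t u * hseq P B n u := by
      funext n; simp [hseq, ht]
    rw [heq] at t1
    exact tendsto_nhds_unique t1 t2
  have hmin : ∀ (x : S → ℝ), (∀ t, 0 ≤ x t) → (∀ t ∈ B, x t = 1) →
      (∀ t ∉ B, x t = ∑ u, P t u * x u) → ∀ t, h t ≤ x t := by
    intro x hx0 hxB hxF t
    exact ciSup_le fun n => hseq_le_feasible P hnn B x hx0 hxB hxF n t
  refine ⟨h0, hB, hF, fun t => ?_⟩
  have : IsLeast {r : ℝ | ∃ x : S → ℝ, (∀ t, 0 ≤ x t) ∧ (∀ t ∈ B, x t = 1) ∧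
      (∀ t ∉ B, x t = ∑ u, P t u * x u) ∧ r = x t} (h t) := by
    constructor
    · exact ⟨h, h0, hB, hF, rfl⟩
    · rintro r ⟨x, hx0, hxB, hxF, rfl⟩
      exact hmin x hx0 hxB hxF t
  exact this.csInf_eq

/-- treating all undiscovered transition mass as leading directly to `B`
yields a sound upper bound on `Pr[◇B | s]`. -/
theorem stmt4 [Fintype S] (P : S → S → ℝ)
    (hnn : ∀ s t, 0 ≤ P s t) (hrow : ∀ s, ∑ t, P s t = 1)
    (B : Set S) (s : S) (hs : s ∉ B)
    (E : Finset S) (hE : ∀ t ∈ E, 0 < P s t)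
    (Up : S → ℝ) (hU : ∀ t ∈ E, hitProb P B t ≤ Up t) :
    hitProb P B s ≤
      (∑ t ∈ E, if t ∉ B then P s t * Up t else 0)
        + (∑ t ∈ E, if t ∈ B then P s t else 0)
        + (1 - ∑ t ∈ E, P s t) := by
  obtain ⟨h0, hB, hF, hEq⟩ := hitProb_eq_hsup P hnn hrow B
  set h : S → ℝ := fun t => ⨆ n, hseq P B n t with hdef
  have hle1 : ∀ t, h t ≤ 1 := by
    intro t
    have hone := one_feasible P hrow B
    exact ciSup_le fun n =>
      hseq_le_feasible P hnn B (fun _ => 1) hone.1 hone.2.1 hone.2.2 n t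
  rw [hEq s, hF s hs]
  have hsplit : (∑ u, P s u * h u)
      = (∑ u ∈ E, P s u * h u) + ∑ u ∈ Finset.univ \ E, P s u * h u := by
    rw [Finset.sum_sdiff_eq_sub (Finset.subset_univ E)]
    ring
  rw [hsplit]
  have h1 : (∑ u ∈ E, P s u * h u)
      ≤ (∑ t ∈ E, if t ∉ B then P s t * Up t else 0)
        + ∑ t ∈ E, if t ∈ B then P s t else 0 := by
    rw [← Finset.sum_add_distrib]
    refine Finset.sum_le_sum fun u hu => ?_
    by_cases hub : u ∈ B
    · simp only [hub, not_true, if_false, if_pos, zero_add]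
      rw [show h u = 1 from hB u hub, mul_one]
    · simp only [hub, not_false_iff, if_true, if_neg, add_zero]
      have : h u ≤ Up u := by
        have := hU u hu; rw [hEq u] at this; exact this
      exact mul_le_mul_of_nonneg_left this (hnn s u)
  have h2 : (∑ u ∈ Finset.univ \ E, P s u * h u) ≤ 1 - ∑ t ∈ E, P s t := by
    have : (∑ u ∈ Finset.univ \ E, P s u * h u)
        ≤ ∑ u ∈ Finset.univ \ E, P s u := by
      refine Finset.sum_le_sum fun u _ => ?_
      calc P s u * h u ≤ P s u * 1 :=
            mul_le_mul_of_nonneg_left (hle1 u) (hnn s u)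
        _ = P s u := mul_one _
    refine this.trans_eq ?_
    rw [Finset.sum_sdiff_eq_sub (Finset.subset_univ E), hrow s]
  linarith
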